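/- Let A, B ∈ D[X] have degree d and valuation 0, let (S_i)_{−1 ≤ i ≤ d} be their sequence of symmetric subresultants, and suppose the pair (S_j, S_{j+1}) is (α,β)-defective with α > 0 and β > 1. Then S_{j+k} = 0 for every k = 2, …, α+β−1. -/

import Mathlib

open Polynomial

/-- The `2j × 2j` square submatrix `Sylv_{j,ℓ}(A,B)` of the Sylvester-type matrix of `A` and `B`
(of formal degree `d`): rows are the coefficient vectors of `A, XA, …, X^{j-1}A, B, …, X^{j-1}B`,
keeping the columns of degrees `0, …, j-2`, the column of degree `j-1+ℓ`, and the columns of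
degrees `d, …, d+j-1`. -/
noncomputable def sylvMat {R : Type*} [CommRing R] (A B : R[X]) (d j ℓ : ℕ) :
    Matrix (Fin (2 * j)) (Fin (2 * j)) R := fun r c =>
  (if (r : ℕ) < j then X ^ (r : ℕ) * A else X ^ ((r : ℕ) - j) * B).coeff
    (if (c : ℕ) < j - 1 then (c : ℕ)
     else if (c : ℕ) = j - 1 then j - 1 + ℓ
     else d + ((c : ℕ) - j))

/-- The sequence of symmetric subresultants of `A` and `B` (of formal degree `d`):
`S_0 = B` and `S_j = ∑_{ℓ=0}^{d-j} det (Sylv_{j,ℓ}(A,B)) · X^ℓ` for `1 ≤ j`. -/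
noncomputable def symSubres {R : Type*} [CommRing R] (A B : R[X]) (d j : ℕ) : R[X] :=
  if j = 0 then B
  else ∑ ℓ ∈ Finset.range (d - j + 1), C (sylvMat A B d j ℓ).det * X ^ ℓ

/-- The pair `(S_j, S_{j+1})` of symmetric subresultants of `A`, `B` (formal degree `d`) is
`(α,β)`-defective: `v(S_j) = 0`, `deg S_j = d - j`, `v(S_{j+1}) = α`, `deg S_{j+1} = d - j - β`. -/
def IsDefective {R : Type*} [CommRing R] (A B : R[X]) (d j α β : ℕ) : Prop :=
  (symSubres A B d j).coeff 0 ≠ 0 ∧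
  (symSubres A B d j).natDegree + j = d ∧
  symSubres A B d (j + 1) ≠ 0 ∧
  (symSubres A B d (j + 1)).natTrailingDegree = α ∧
  (symSubres A B d (j + 1)).natDegree + β + j = d

set_option maxHeartbeats 1000000

section Aux

open Matrix Finset

variable {R : Type*} [CommRing R]

lemma det_updateColumn_finsetSum {n : Type*} [DecidableEq n] [Fintype n]
    (M : Matrix n n R) (j : n) {ι : Type*} (s : Finset ι) (v : ι → n → R) :
    (M.updateCol j (fun r => ∑ a ∈ s, v a r)).det = ∑ a ∈ s, (M.updateCol j (v a)).det := by
  induction s using Finset.cons_induction with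
  | empty =>
    simp only [Finset.sum_empty]
    exact Matrix.det_eq_zero_of_column_eq_zero j fun i => by simp
  | cons a s ha ih =>
    have h : (fun r => ∑ b ∈ Finset.cons a s ha, v b r) = (v a + fun r => ∑ b ∈ s, v b r) := by
      funext r; simp [Finset.sum_cons]
    rw [h, Matrix.det_updateCol_add, ih, Finset.sum_cons]

lemma sum_fin_two_mul {M : Type*} [AddCommMonoid M] (J : ℕ) (g : ℕ → M) :
    (∑ r : Fin (2 * J), g (r : ℕ)) =
      ∑ r ∈ Finset.range J, g r + ∑ r ∈ Finset.range J, g (J + r) := by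
  rw [Fin.sum_univ_eq_sum_range (fun n => g n) (2 * J)]
  have h2 : 2 * J = J + J := by ring
  rw [h2, Finset.range_eq_Ico,
    ← Finset.sum_Ico_consecutive (fun n => g n) (Nat.zero_le J) (by omega : J ≤ J + J)]
  have h3 : ∑ i ∈ Finset.Ico J (J + J), g i = ∑ r ∈ Finset.range J, g (J + r) := by
    rw [Finset.sum_Ico_eq_sum_range]
    have : J + J - J = J := by omega
    rw [this]
  rw [h3, Nat.Ico_zero_eq_range]

lemma coeff_finsetSum_C_mul_X_pow (n : ℕ) (a : ℕ → R) (t : ℕ) :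
    (∑ r ∈ Finset.range n, C (a r) * X ^ r).coeff t = if t < n then a t else 0 := by
  rw [Polynomial.finset_sum_coeff]
  simp only [Polynomial.coeff_C_mul, Polynomial.coeff_X_pow, mul_ite, mul_one, mul_zero]
  rw [Finset.sum_ite_eq (Finset.range n) t a]
  simp [Finset.mem_range]

lemma eq_sum_range_of_coeff_eq_zero (P : R[X]) (n : ℕ) (h : ∀ t, n ≤ t → P.coeff t = 0) :
    P = ∑ r ∈ Finset.range n, C (P.coeff r) * X ^ r := by
  ext t
  rw [coeff_finsetSum_C_mul_X_pow]
  split_ifs with ht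
  · rfl
  · exact h t (le_of_not_gt ht)

lemma coeff_mul_expand (P Q : R[X]) (n : ℕ) (h : ∀ t, n ≤ t → P.coeff t = 0) (t : ℕ) :
    (P * Q).coeff t = ∑ r ∈ Finset.range n, P.coeff r * (X ^ r * Q).coeff t := by
  conv_lhs => rw [eq_sum_range_of_coeff_eq_zero P n h]
  rw [Finset.sum_mul, Polynomial.finset_sum_coeff]
  refine Finset.sum_congr rfl fun r _ => ?_
  rw [mul_assoc, Polynomial.coeff_C_mul]

lemma exists_bezout (A B : R[X]) (d j : ℕ) (hdj : j + 1 ≤ d)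
    (hA : ∀ t, d < t → A.coeff t = 0) (hB : ∀ t, d < t → B.coeff t = 0) :
    ∃ U V : R[X], (∀ n, j < n → U.coeff n = 0) ∧ (∀ n, j < n → V.coeff n = 0) ∧
      U * A + V * B = X ^ j * symSubres A B d (j + 1) := by
  classical
  set J := j + 1 with hJdef
  have h2J : j < 2 * J := by omega
  set j₀ : Fin (2 * J) := ⟨j, h2J⟩ with hj₀
  set Rrow : Fin (2 * J) → R[X] :=
    fun r => if (r : ℕ) < J then X ^ (r : ℕ) * A else X ^ ((r : ℕ) - J) * B with hRrow
  set N : Matrix (Fin (2 * J)) (Fin (2 * J)) R := sylvMat A B d J 0 with hN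
  have hNval : ∀ (r c : Fin (2 * J)), N r c =
      (Rrow r).coeff (if (c : ℕ) < J - 1 then (c : ℕ)
        else if (c : ℕ) = J - 1 then J - 1 + 0 else d + ((c : ℕ) - J)) := by
    intro r c; rfl
  have hRcoeff : ∀ (r : Fin (2 * J)) (t : ℕ), d + J ≤ t → (Rrow r).coeff t = 0 := by
    intro r t ht
    have hr2 : (r : ℕ) < 2 * J := r.isLt
    simp only [hRrow]
    split_ifs with h
    · rw [Polynomial.coeff_X_pow_mul']
      split_ifs with h'
      · exact hA _ (by omega)
      · rfl
    · rw [Polynomial.coeff_X_pow_mul']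
      split_ifs with h'
      · exact hB _ (by omega)
      · rfl
  set cv : ℕ → R := fun n => if h : n < 2 * J then N.adjugate j₀ ⟨n, h⟩ else 0 with hcv
  set U : R[X] := ∑ r ∈ Finset.range J, C (cv r) * X ^ r with hU
  set V : R[X] := ∑ r ∈ Finset.range J, C (cv (J + r)) * X ^ r with hV
  refine ⟨U, V, ?_, ?_, ?_⟩
  · intro n hn
    rw [hU, coeff_finsetSum_C_mul_X_pow, if_neg (by omega)]
  · intro n hn
    rw [hV, coeff_finsetSum_C_mul_X_pow, if_neg (by omega)]
  -- the two evaluations of the same determinant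
  have h1 : ((N.map C).updateCol j₀ Rrow).det = U * A + V * B := by
    rw [← Matrix.cramer_apply, Matrix.cramer_eq_adjugate_mulVec]
    have hadj : (N.map C).adjugate = (N.adjugate).map C := by
      have h := RingHom.map_adjugate (C : R →+* R[X]) N
      simp only [RingHom.mapMatrix_apply] at h
      exact h.symm
    rw [hadj]
    have hmv : ((N.adjugate).map C *ᵥ Rrow) j₀
        = ∑ r : Fin (2 * J), C (N.adjugate j₀ r) * Rrow r := by
      simp [Matrix.mulVec, dotProduct, Matrix.map_apply]
    rw [hmv]
    have hg : ∀ r : Fin (2 * J), C (N.adjugate j₀ r) * Rrow r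
        = (fun n => C (cv n) * (if n < J then X ^ n * A else X ^ (n - J) * B)) (r : ℕ) := by
      intro r
      simp only [hcv, hRrow]
      rw [dif_pos r.isLt]
    have hsplit := sum_fin_two_mul J
      (fun n => C (cv n) * (if n < J then X ^ n * A else X ^ (n - J) * B))
    beta_reduce at hsplit
    rw [Finset.sum_congr rfl fun r _ => hg r, hsplit]
    rw [hU, hV, Finset.sum_mul, Finset.sum_mul]
    congr 1
    · refine Finset.sum_congr rfl fun r hr => ?_
      rw [if_pos (Finset.mem_range.mp hr), mul_assoc]
    · refine Finset.sum_congr rfl fun r hr => ?_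
      have e1 : ¬ (J + r < J) := by omega
      have e2 : J + r - J = r := by omega
      rw [if_neg e1, e2, mul_assoc]
  have h2 : ((N.map C).updateCol j₀ Rrow).det = X ^ j * symSubres A B d J := by
    have hexp : Rrow = fun r => ∑ t ∈ Finset.range (d + J), C ((Rrow r).coeff t) * X ^ t := by
      funext r
      exact eq_sum_range_of_coeff_eq_zero _ _ (hRcoeff r)
    conv_lhs => rw [hexp]
    rw [det_updateColumn_finsetSum]
    -- inner determinants
    have hDt : ∀ t : ℕ,
        ((N.map C).updateCol j₀ (fun r => C ((Rrow r).coeff t) * X ^ t)).det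
        = X ^ t * C ((N.updateCol j₀ (fun r => (Rrow r).coeff t)).det) := by
      intro t
      have hsm : (fun r => C ((Rrow r).coeff t) * X ^ t)
          = (X ^ t : R[X]) • (fun r : Fin (2 * J) => C ((Rrow r).coeff t)) := by
        funext r
        simp only [Pi.smul_apply, smul_eq_mul]
        ring
      rw [hsm, Matrix.det_updateCol_smul]
      have hmc : (N.map C).updateCol j₀ (fun r => C ((Rrow r).coeff t))
          = (N.updateCol j₀ (fun r => (Rrow r).coeff t)).map C := by
        rw [Matrix.map_updateCol]
        rfl
      rw [hmc]
      have hdetmap := RingHom.map_det (C : R →+* R[X])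
        (N.updateCol j₀ (fun r => (Rrow r).coeff t))
      simp only [RingHom.mapMatrix_apply] at hdetmap
      rw [← hdetmap]
    have hDval : ∀ t : ℕ, t < d + J →
        (N.updateCol j₀ (fun r => (Rrow r).coeff t)).det
        = if t ∈ Finset.Ico j d then (sylvMat A B d J (t - j)).det else 0 := by
      intro t ht
      by_cases h1t : t < j
      · rw [if_neg (by simp [Finset.mem_Ico]; omega)]
        refine Matrix.det_zero_of_column_eq (i := ⟨t, by omega⟩) (j := j₀) ?_ ?_
        · intro hcontra
          have := congrArg Fin.val hcontra
          simp only [hj₀, Fin.val_mk] at this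
          omega
        · intro r
          rw [Matrix.updateCol_ne (by intro hcontra; have := congrArg Fin.val hcontra; simp only [hj₀, Fin.val_mk] at this; omega),
            Matrix.updateCol_self, hNval]
          rw [if_pos (by simp; omega)]
      · by_cases h2t : t < d
        · rw [if_pos (by simp [Finset.mem_Ico]; omega)]
          congr 1
          ext r c
          by_cases hc : c = j₀
          · subst hc
            rw [Matrix.updateCol_self]
            show (Rrow r).coeff t = (Rrow r).coeff _
            congr 1
            have e1 : ¬ ((j₀ : ℕ) < J - 1) := by show ¬ (j < J - 1); omega
            have e2 : ((j₀ : ℕ) = J - 1) := by show j = J - 1; omega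
            rw [if_neg e1, if_pos e2]
            omega
          · have hcval : (c : ℕ) ≠ j := by
              intro hcontra
              exact hc (Fin.ext hcontra)
            rw [Matrix.updateCol_ne hc, hNval]
            show (Rrow r).coeff _ = (Rrow r).coeff _
            congr 1
            by_cases hcl : (c : ℕ) < J - 1
            · rw [if_pos hcl, if_pos hcl]
            · rw [if_neg hcl, if_neg hcl, if_neg (by omega), if_neg (by omega)]
        · rw [if_neg (by simp [Finset.mem_Ico]; omega)]
          refine Matrix.det_zero_of_column_eq (i := ⟨J + (t - d), by omega⟩) (j := j₀) ?_ ?_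
          · intro hcontra
            have := congrArg Fin.val hcontra
            simp only [hj₀, Fin.val_mk] at this
            omega
          · intro r
            rw [Matrix.updateCol_ne (by intro hcontra; have := congrArg Fin.val hcontra; simp only [hj₀, Fin.val_mk] at this; omega),
              Matrix.updateCol_self, hNval]
            rw [if_neg (by simp; omega), if_neg (by simp; omega)]
            congr 1
            simp
            omega
    calc ∑ t ∈ Finset.range (d + J),
          ((N.map C).updateCol j₀ (fun r => C ((Rrow r).coeff t) * X ^ t)).det
        = ∑ t ∈ Finset.range (d + J),
            (if t ∈ Finset.Ico j d then X ^ t * C ((sylvMat A B d J (t - j)).det) else 0) := by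
          refine Finset.sum_congr rfl fun t ht => ?_
          rw [hDt t, hDval t (Finset.mem_range.mp ht)]
          split_ifs with h
          · rfl
          · simp
      _ = ∑ t ∈ Finset.range (d + J) ∩ Finset.Ico j d,
            X ^ t * C ((sylvMat A B d J (t - j)).det) := Finset.sum_ite_mem _ _ _
      _ = ∑ t ∈ Finset.Ico j d, X ^ t * C ((sylvMat A B d J (t - j)).det) := by
          congr 1
          rw [Finset.inter_eq_right]
          intro t ht
          simp only [Finset.mem_Ico] at ht
          simp only [Finset.mem_range]
          omega
      _ = ∑ ℓ ∈ Finset.range (d - j), X ^ (j + ℓ) * C ((sylvMat A B d J (j + ℓ - j)).det) := by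
          rw [Finset.sum_Ico_eq_sum_range]
      _ = X ^ j * symSubres A B d J := by
          rw [symSubres, if_neg (by omega)]
          have hrange : d - J + 1 = d - j := by omega
          rw [hrange, Finset.mul_sum]
          refine Finset.sum_congr rfl fun ℓ hℓ => ?_
          have : j + ℓ - j = ℓ := by omega
          rw [this, pow_add]
          ring
  rw [← h1, h2]

end Aux

/-- Structure theorem, part 1, case `α > 0`, `β > 1`: if `(S_j, S_{j+1})` is `(α,β)`-defective
with `α > 0` and `β > 1`, then `S_{j+k} = 0` for `k = 2, …, α+β-1`. -/
theorem structure_theorem_nullity (D : Subring ℂ) (A B : Polynomial D) (d j α β : ℕ)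
    (hAdeg : A.degree = (d : ℕ)) (hBdeg : B.degree = (d : ℕ))
    (hAval : A.coeff 0 ≠ 0) (hBval : B.coeff 0 ≠ 0)
    (hdef : IsDefective A B d j α β) (hα : 0 < α) (hβ : 1 < β) :
    ∀ k, 2 ≤ k → k ≤ α + β - 1 → symSubres A B d (j + k) = 0 := by
  classical
  obtain ⟨hj0, hjdeg, hS0, hStr, hSdeg⟩ := hdef
  intro k hk2 hkab
  set f : D →+* ℂ := D.subtype with hfdef
  have hfinj : Function.Injective f := Subtype.coe_injective
  set A' : ℂ[X] := A.map f with hA'def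
  set B' : ℂ[X] := B.map f with hB'def
  have hsylv_map : ∀ J ℓ, (sylvMat A B d J ℓ).map f = sylvMat A' B' d J ℓ := by
    intro J ℓ
    funext r c
    simp only [Matrix.map_apply, sylvMat]
    rw [← Polynomial.coeff_map]
    congr 1
    split_ifs with h <;>
      simp [Polynomial.map_mul, Polynomial.map_pow, Polynomial.map_X, hA'def, hB'def]
  have hdet_map : ∀ J ℓ, f ((sylvMat A B d J ℓ).det) = (sylvMat A' B' d J ℓ).det := by
    intro J ℓ
    rw [RingHom.map_det]
    simp only [RingHom.mapMatrix_apply]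
    rw [hsylv_map]
  have hsym_map : ∀ J, (symSubres A B d J).map f = symSubres A' B' d J := by
    intro J
    by_cases hJ : J = 0
    · simp [symSubres, hJ, hB'def]
    · rw [symSubres, symSubres, if_neg hJ, if_neg hJ]
      rw [Polynomial.map_sum]
      refine Finset.sum_congr rfl fun ℓ _ => ?_
      simp only [Polynomial.map_mul, Polynomial.map_pow,
        Polynomial.map_C, Polynomial.map_X, hdet_map]
  set S : ℂ[X] := symSubres A' B' d (j + 1) with hSdefin
  have hSmap : (symSubres A B d (j + 1)).map f = S := hsym_map (j + 1)
  have hS'0 : S ≠ 0 := by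
    rw [← hSmap]
    exact (Polynomial.map_ne_zero_iff hfinj).mpr hS0
  have hlow : ∀ n, n < α → S.coeff n = 0 := by
    intro n hn
    rw [← hSmap, Polynomial.coeff_map,
      Polynomial.coeff_eq_zero_of_lt_natTrailingDegree (by rw [hStr]; exact hn), map_zero]
  have hhigh : ∀ n, d - β - j < n → S.coeff n = 0 := by
    intro n hn
    rw [← hSmap, Polynomial.coeff_map,
      Polynomial.coeff_eq_zero_of_natDegree_lt (by omega), map_zero]
  have hd2 : j + 2 ≤ d := by omega
  have hA'c : ∀ t, d < t → A'.coeff t = 0 := by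
    intro t ht
    rw [hA'def, Polynomial.coeff_map, Polynomial.coeff_eq_zero_of_degree_lt, map_zero]
    rw [hAdeg]
    exact_mod_cast ht
  have hB'c : ∀ t, d < t → B'.coeff t = 0 := by
    intro t ht
    rw [hB'def, Polynomial.coeff_map, Polynomial.coeff_eq_zero_of_degree_lt, map_zero]
    rw [hBdeg]
    exact_mod_cast ht
  obtain ⟨U, V, hU, hV, hUV⟩ := exists_bezout A' B' d j (by omega) hA'c hB'c
  have hex : ∃ n, U.coeff n ≠ 0 ∨ V.coeff n ≠ 0 := by
    by_contra hcon
    push_neg at hcon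
    have hU0 : U = 0 := by ext n; simp [(hcon n).1]
    have hV0 : V = 0 := by ext n; simp [(hcon n).2]
    apply hS'0
    have h := hUV
    rw [hU0, hV0] at h
    simp only [zero_mul, add_zero] at h
    have hX : (X : ℂ[X]) ^ j ≠ 0 := pow_ne_zero _ Polynomial.X_ne_zero
    rcases mul_eq_zero.mp h.symm with h' | h'
    · exact absurd h' hX
    · exact h'
  set n₀ := Nat.find hex with hn₀def
  have hn₀ : U.coeff n₀ ≠ 0 ∨ V.coeff n₀ ≠ 0 := Nat.find_spec hex
  have hn₀min : ∀ n, n < n₀ → U.coeff n = 0 ∧ V.coeff n = 0 := by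
    intro n hn
    have h := Nat.find_min hex hn
    push_neg at h
    exact h
  have hn₀j : n₀ ≤ j := by
    by_contra hcon
    push_neg at hcon
    rcases hn₀ with h | h
    · exact h (hU n₀ hcon)
    · exact h (hV n₀ hcon)
  set J : ℕ := j + k with hJdef
  have hdetz : ∀ ℓ, (sylvMat A' B' d J ℓ).det = 0 := by
    intro ℓ
    set M : Matrix (Fin (2 * J)) (Fin (2 * J)) ℂ := sylvMat A' B' d J ℓ with hM
    set j₀ : Fin (2 * J) := ⟨J - 1, by omega⟩ with hj₀
    set gv : ℕ → Fin (2 * J) → ℂ := fun m r =>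
      if (r : ℕ) < J then (X ^ m * U).coeff (r : ℕ) else (X ^ m * V).coeff ((r : ℕ) - J)
      with hgv
    set colIdx : Fin (2 * J) → ℕ := fun c =>
      if (c : ℕ) < J - 1 then (c : ℕ) else if (c : ℕ) = J - 1 then J - 1 + ℓ
      else d + ((c : ℕ) - J) with hcol
    have hMval : ∀ r c, M r c =
        (if (r : ℕ) < J then X ^ (r : ℕ) * A' else X ^ ((r : ℕ) - J) * B').coeff (colIdx c) := by
      intro r c; rfl
    have hXU : ∀ m s, J ≤ s → m + 1 ≤ k → (X ^ m * U).coeff s = 0 := by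
      intro m s hs hm
      rw [Polynomial.coeff_X_pow_mul']
      split_ifs with h
      · exact hU _ (by omega)
      · rfl
    have hXV : ∀ m s, J ≤ s → m + 1 ≤ k → (X ^ m * V).coeff s = 0 := by
      intro m s hs hm
      rw [Polynomial.coeff_X_pow_mul']
      split_ifs with h
      · exact hV _ (by omega)
      · rfl
    have hcoladd : ∀ m, m + 1 ≤ k → ∀ c : Fin (2 * J),
        (∑ r : Fin (2 * J), gv m r * M r c) = (X ^ (m + j) * S).coeff (colIdx c) := by
      intro m hm c
      have hsum := sum_fin_two_mul J (fun n =>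
        (if n < J then (X ^ m * U).coeff n * (X ^ n * A').coeff (colIdx c)
          else (X ^ m * V).coeff (n - J) * (X ^ (n - J) * B').coeff (colIdx c)))
      beta_reduce at hsum
      have hterm : ∀ r : Fin (2 * J), gv m r * M r c =
          (fun n => (if n < J then (X ^ m * U).coeff n * (X ^ n * A').coeff (colIdx c)
            else (X ^ m * V).coeff (n - J) * (X ^ (n - J) * B').coeff (colIdx c))) (r : ℕ) := by
        intro r
        simp only [hgv, hMval]
        by_cases h : (r : ℕ) < J
        · rw [if_pos h, if_pos h, if_pos h]
        · rw [if_neg h, if_neg h, if_neg h]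
      rw [Finset.sum_congr rfl fun r _ => hterm r, hsum]
      have ha : ∀ r ∈ Finset.range J,
          (if r < J then (X ^ m * U).coeff r * (X ^ r * A').coeff (colIdx c)
            else (X ^ m * V).coeff (r - J) * (X ^ (r - J) * B').coeff (colIdx c))
          = (X ^ m * U).coeff r * (X ^ r * A').coeff (colIdx c) :=
        fun r hr => if_pos (Finset.mem_range.mp hr)
      have hb : ∀ r ∈ Finset.range J,
          (if J + r < J then (X ^ m * U).coeff (J + r) * (X ^ (J + r) * A').coeff (colIdx c)
            else (X ^ m * V).coeff (J + r - J) * (X ^ (J + r - J) * B').coeff (colIdx c))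
          = (X ^ m * V).coeff r * (X ^ r * B').coeff (colIdx c) := by
        intro r hr
        rw [if_neg (by omega)]
        have e : J + r - J = r := by omega
        rw [e]
      rw [Finset.sum_congr rfl ha, Finset.sum_congr rfl hb,
        ← coeff_mul_expand (X ^ m * U) A' J (fun s hs => hXU m s hs hm) (colIdx c),
        ← coeff_mul_expand (X ^ m * V) B' J (fun s hs => hXV m s hs hm) (colIdx c),
        ← Polynomial.coeff_add]
      congr 1
      calc X ^ m * U * A' + X ^ m * V * B' = X ^ m * (U * A' + V * B') := by ring
        _ = X ^ m * (X ^ j * S) := by rw [hUV]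
        _ = X ^ (m + j) * S := by rw [← mul_assoc, ← pow_add]
    have hside : ∀ m, m + 1 ≤ k → k ≤ m + α + 1 → m + 1 ≤ β → ∀ c : Fin (2 * J),
        (c : ℕ) ≠ J - 1 → (∑ r : Fin (2 * J), gv m r * M r c) = 0 := by
      intro m hmk hma hmb c hc
      rw [hcoladd m hmk c]
      by_cases h1 : (c : ℕ) < J - 1
      · have htv : colIdx c = (c : ℕ) := by simp only [hcol]; rw [if_pos h1]
        rw [htv, Polynomial.coeff_X_pow_mul']
        split_ifs with h2
        · exact hlow _ (by omega)
        · rfl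
      · have hcJ : J ≤ (c : ℕ) := by omega
        have htv : colIdx c = d + ((c : ℕ) - J) := by
          simp only [hcol]; rw [if_neg h1, if_neg hc]
        rw [htv, Polynomial.coeff_X_pow_mul', if_pos (by omega)]
        exact hhigh _ (by omega)
    set m1 : ℕ := k - 1 - α with hm1
    set m2 : ℕ := m1 + 1 with hm2
    have hm1k : m1 + 1 ≤ k := by omega
    have hm2k : m2 + 1 ≤ k := by omega
    have hm1a : k ≤ m1 + α + 1 := by omega
    have hm2a : k ≤ m2 + α + 1 := by omega
    have hm1b : m1 + 1 ≤ β := by omega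
    have hm2b : m2 + 1 ≤ β := by omega
    have hkey : ∀ r1 r2 : Fin (2 * J), gv m1 r1 ≠ 0 → gv m2 r2 ≠ 0 → gv m2 r1 = 0 →
        M.det = 0 := by
      intro r1 r2 h1 h2 h12
      set s1 : ℂ := ∑ r : Fin (2 * J), gv m1 r * M r j₀ with hs1
      set s2 : ℂ := ∑ r : Fin (2 * J), gv m2 r * M r j₀ with hs2
      have hvm : ∀ (v : Fin (2 * J) → ℂ) (c : Fin (2 * J)),
          Matrix.vecMul v M c = ∑ r : Fin (2 * J), v r * M r c := by
        intro v c
        simp [Matrix.vecMul, dotProduct]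
      rw [← Matrix.exists_vecMul_eq_zero_iff]
      by_cases hs20 : s2 = 0
      · refine ⟨gv m2, ?_, ?_⟩
        · intro hzero
          apply h2
          rw [hzero]
          rfl
        · funext c
          simp only [Pi.zero_apply]
          rw [hvm]
          by_cases hc : (c : ℕ) = J - 1
          · have hcj : c = j₀ := Fin.ext (by rw [hc])
            rw [hcj, ← hs2]
            exact hs20
          · exact hside m2 hm2k hm2a hm2b c hc
      · refine ⟨fun r => s2 * gv m1 r - s1 * gv m2 r, ?_, ?_⟩
        · intro hzero
          have h := congrFun hzero r1
          simp only [Pi.zero_apply] at h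
          rw [h12, mul_zero, sub_zero] at h
          rcases mul_eq_zero.mp h with h' | h'
          · exact hs20 h'
          · exact h1 h'
        · funext c
          simp only [Pi.zero_apply]
          rw [hvm]
          have hexp : ∑ r : Fin (2 * J), (s2 * gv m1 r - s1 * gv m2 r) * M r c
              = s2 * (∑ r : Fin (2 * J), gv m1 r * M r c)
                - s1 * (∑ r : Fin (2 * J), gv m2 r * M r c) := by
            rw [Finset.mul_sum, Finset.mul_sum, ← Finset.sum_sub_distrib]
            exact Finset.sum_congr rfl fun r _ => by ring
          rw [hexp]
          by_cases hc : (c : ℕ) = J - 1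
          · have hcj : c = j₀ := Fin.ext (by rw [hc])
            rw [hcj, ← hs1, ← hs2]
            ring
          · rw [hside m1 hm1k hm1a hm1b c hc, hside m2 hm2k hm2a hm2b c hc]
            ring
    rcases hn₀ with hUn | hVn
    · have hb1 : n₀ + m1 < J := by omega
      have hb2 : n₀ + m2 < J := by omega
      refine hkey ⟨n₀ + m1, by omega⟩ ⟨n₀ + m2, by omega⟩ ?_ ?_ ?_
      · have e : gv m1 ⟨n₀ + m1, by omega⟩ = U.coeff n₀ := by
          simp only [hgv]
          rw [if_pos (show ((⟨n₀ + m1, by omega⟩ : Fin (2 * J)) : ℕ) < J from hb1)]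
          show (X ^ m1 * U).coeff (n₀ + m1) = U.coeff n₀
          rw [Polynomial.coeff_X_pow_mul', if_pos (by omega)]
          congr 1
          omega
        rw [e]; exact hUn
      · have e : gv m2 ⟨n₀ + m2, by omega⟩ = U.coeff n₀ := by
          simp only [hgv]
          rw [if_pos (show ((⟨n₀ + m2, by omega⟩ : Fin (2 * J)) : ℕ) < J from hb2)]
          show (X ^ m2 * U).coeff (n₀ + m2) = U.coeff n₀
          rw [Polynomial.coeff_X_pow_mul', if_pos (by omega)]
          congr 1
          omega
        rw [e]; exact hUn
      · have e : gv m2 ⟨n₀ + m1, by omega⟩ = (X ^ m2 * U).coeff (n₀ + m1) := by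
          simp only [hgv]
          rw [if_pos (show ((⟨n₀ + m1, by omega⟩ : Fin (2 * J)) : ℕ) < J from hb1)]
        rw [e, Polynomial.coeff_X_pow_mul']
        split_ifs with h
        · exact (hn₀min _ (by omega)).1
        · rfl
    · have hb1 : n₀ + m1 < J := by omega
      have hb2 : n₀ + m2 < J := by omega
      refine hkey ⟨J + (n₀ + m1), by omega⟩ ⟨J + (n₀ + m2), by omega⟩ ?_ ?_ ?_
      · have e : gv m1 ⟨J + (n₀ + m1), by omega⟩ = V.coeff n₀ := by
          simp only [hgv]
          rw [if_neg (show ¬ ((⟨J + (n₀ + m1), by omega⟩ : Fin (2 * J)) : ℕ) < J by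
            show ¬ J + (n₀ + m1) < J; omega)]
          show (X ^ m1 * V).coeff (J + (n₀ + m1) - J) = V.coeff n₀
          have e2 : J + (n₀ + m1) - J = n₀ + m1 := by omega
          rw [e2, Polynomial.coeff_X_pow_mul', if_pos (by omega)]
          congr 1
          omega
        rw [e]; exact hVn
      · have e : gv m2 ⟨J + (n₀ + m2), by omega⟩ = V.coeff n₀ := by
          simp only [hgv]
          rw [if_neg (show ¬ ((⟨J + (n₀ + m2), by omega⟩ : Fin (2 * J)) : ℕ) < J by
            show ¬ J + (n₀ + m2) < J; omega)]
          show (X ^ m2 * V).coeff (J + (n₀ + m2) - J) = V.coeff n₀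
          have e2 : J + (n₀ + m2) - J = n₀ + m2 := by omega
          rw [e2, Polynomial.coeff_X_pow_mul', if_pos (by omega)]
          congr 1
          omega
        rw [e]; exact hVn
      · have e : gv m2 ⟨J + (n₀ + m1), by omega⟩ = (X ^ m2 * V).coeff (n₀ + m1) := by
          simp only [hgv]
          rw [if_neg (show ¬ ((⟨J + (n₀ + m1), by omega⟩ : Fin (2 * J)) : ℕ) < J by
            show ¬ J + (n₀ + m1) < J; omega)]
          show (X ^ m2 * V).coeff (J + (n₀ + m1) - J) = _
          congr 1
          omega
        rw [e, Polynomial.coeff_X_pow_mul']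
        split_ifs with h
        · exact (hn₀min _ (by omega)).2
        · rfl
  have hdetzD : ∀ ℓ, (sylvMat A B d J ℓ).det = 0 := by
    intro ℓ
    apply hfinj
    rw [hdet_map, hdetz, map_zero]
  show symSubres A B d J = 0
  rw [symSubres, if_neg (by omega)]
  refine Finset.sum_eq_zero fun ℓ _ => ?_
  rw [hdetzD, Polynomial.C_0, zero_mul]
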